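/- Let c > 0, D > 0, and let ν be a Borel measure on (0,∞) with m := ∫₀^∞ z ν(dz) < ∞ and Π(x) := ν((x,∞)); set ν̄_I(x) = ∫_x^∞ Π(z) dz. Suppose 0 < γ < c/D and ∫₀^∞ (e^{γ z} − 1) ν(dz) < ∞. With k_D(x) = (c/D) e^{−(c/D) x} and h(u) = (1/c) ∫₀^u k_D(u − x) ν̄_I(x) dx + e^{−(c/D) u}, one has ∫₀^∞ e^{γ x} h(x) dx = (1/(γ (c − D γ))) [ (1/γ) ∫₀^∞ (e^{γ z} − 1) ν(dz) − m ] + D/(c − D γ). In particular, if additionally the Lundberg identity c γ − D γ² = ∫₀^∞ (e^{γ z} − 1) ν(dz) holds, then ∫₀^∞ e^{γ x} h(x) dx = (c − m)/(γ (c − D γ)). -/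

import Mathlib

open MeasureTheory Set

/-- The tail of the Lévy measure `ν`: `Π(x) = ν((x,∞))`. -/
noncomputable def nuTail (ν : Measure ℝ) (x : ℝ) : ℝ := (ν (Ioi x)).toReal

/-- The integrated tail `ν̄_I(x) = ∫_x^∞ Π(z) dz`. -/
noncomputable def nuIbar (ν : Measure ℝ) (x : ℝ) : ℝ := ∫ z in Ioi x, nuTail ν z

/-- The exponential density `k_D(x) = (c/D) e^{−(c/D)x}`. -/
noncomputable def kDens (c D x : ℝ) : ℝ := (c / D) * Real.exp (-(c / D) * x)

/-- The inhomogeneous term of the defective renewal equation: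
`h(u) = (1/c) ∫₀^u k_D(u−x) ν̄_I(x) dx + e^{−(c/D)u}`. -/
noncomputable def renH (c D : ℝ) (ν : Measure ℝ) (u : ℝ) : ℝ :=
  (1 / c) * (∫ x in (0 : ℝ)..u, kDens c D (u - x) * nuIbar ν x) + Real.exp (-(c / D) * u)

section TiltedAux
lemma meas_tailFun (ν : Measure ℝ) : Measurable fun z => ν (Ioi z) :=
  Antitone.measurable fun _ _ hab => measure_mono (Ioi_subset_Ioi hab)

lemma meas_nuTail (ν : Measure ℝ) : Measurable (nuTail ν) :=
  (meas_tailFun ν).ennreal_toReal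

lemma nuTail_nonneg (ν : Measure ℝ) (z : ℝ) : 0 ≤ nuTail ν z := ENNReal.toReal_nonneg

lemma nuIbar_nonneg (ν : Measure ℝ) (x : ℝ) : 0 ≤ nuIbar ν x :=
  integral_nonneg fun z => nuTail_nonneg ν z

lemma meas_nuIbar (ν : Measure ℝ) : Measurable (nuIbar ν) := by
  have h : StronglyMeasurable fun p : ℝ × ℝ => (Ioi p.1).indicator (nuTail ν) p.2 := by
    apply Measurable.stronglyMeasurable
    have heq : (fun p : ℝ × ℝ => (Ioi p.1).indicator (nuTail ν) p.2)
        = fun p : ℝ × ℝ => if p.1 < p.2 then nuTail ν p.2 else 0 := by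
      funext p; simp [indicator_apply, mem_Ioi]
    rw [heq]
    exact Measurable.ite (measurableSet_lt measurable_fst measurable_snd)
      ((meas_nuTail ν).comp measurable_snd) measurable_const
  have h2 := h.integral_prod_right' (ν := volume)
  have heq2 : nuIbar ν = fun x => ∫ z, (Ioi x).indicator (nuTail ν) z := by
    funext x; rw [nuIbar, ← integral_indicator measurableSet_Ioi]
  rw [heq2]; exact h2.measurable

lemma layercake (ν : Measure ℝ) [SigmaFinite ν] (x : ℝ) :
    ∫⁻ z in Ioi x, ν (Ioi z) = ∫⁻ w in Ioi x, ENNReal.ofReal (w - x) ∂ν := by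
  have key : ∫⁻ z in Ioi x, ν (Ioi z) = ∫⁻ w, ENNReal.ofReal (w - x) ∂ν := by
    calc ∫⁻ z in Ioi x, ν (Ioi z)
        = ∫⁻ z in Ioi x, ∫⁻ w, (Ioi z).indicator (fun _ => (1:ENNReal)) w ∂ν := by
          refine lintegral_congr fun z => ?_
          rw [lintegral_indicator measurableSet_Ioi, setLIntegral_one]
      _ = ∫⁻ w, ∫⁻ z in Ioi x, (Ioi z).indicator (fun _ => (1:ENNReal)) w ∂volume ∂ν := by
          apply lintegral_lintegral_swap
          have : (Function.uncurry fun z w => (Ioi z).indicator (fun _ => (1:ENNReal)) w)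
              = fun p : ℝ × ℝ => if p.1 < p.2 then 1 else 0 := by
            funext p; simp [Function.uncurry, indicator_apply, mem_Ioi]
          rw [this]
          exact (Measurable.ite (measurableSet_lt measurable_fst measurable_snd)
            measurable_const measurable_const).aemeasurable
      _ = ∫⁻ w, ENNReal.ofReal (w - x) ∂ν := by
          refine lintegral_congr fun w => ?_
          calc ∫⁻ z in Ioi x, (Ioi z).indicator (fun _ => (1:ENNReal)) w
              = ∫⁻ z in Ioi x, (Iio w).indicator (fun _ => (1:ENNReal)) z := by
                refine lintegral_congr fun z => ?_
                simp [indicator_apply, mem_Ioi, mem_Iio]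
            _ = ENNReal.ofReal (w - x) := by
                rw [lintegral_indicator measurableSet_Iio, setLIntegral_one,
                  Measure.restrict_apply measurableSet_Iio, Iio_inter_Ioi, Real.volume_Ioo]
  rw [key]
  symm
  rw [← lintegral_indicator measurableSet_Ioi]
  refine lintegral_congr fun w => ?_
  by_cases hw : w ∈ Ioi x
  · simp [hw]
  · rw [mem_Ioi, not_lt] at hw
    simp [indicator_apply, mem_Ioi, not_lt.2 hw, ENNReal.ofReal_eq_zero.2 (by linarith : w - x ≤ 0)]

lemma tail_lt_top (ν : Measure ℝ) (hm : ∫⁻ w in Ioi 0, ENNReal.ofReal w ∂ν ≠ ⊤)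
    {z : ℝ} (hz : 0 < z) : ν (Ioi z) < ⊤ := by
  by_contra h
  push_neg at h
  have h1 : ENNReal.ofReal z * ν (Ioi z) ≤ ∫⁻ w in Ioi 0, ENNReal.ofReal w ∂ν := by
    calc ENNReal.ofReal z * ν (Ioi z) = ∫⁻ _ in Ioi z, ENNReal.ofReal z ∂ν :=
          (setLIntegral_const _ _).symm
      _ ≤ ∫⁻ w in Ioi z, ENNReal.ofReal w ∂ν :=
          setLIntegral_mono' measurableSet_Ioi fun w hw =>
            ENNReal.ofReal_le_ofReal (le_of_lt hw)
      _ ≤ ∫⁻ w in Ioi 0, ENNReal.ofReal w ∂ν := lintegral_mono_set (Ioi_subset_Ioi hz.le)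
  rw [top_le_iff.mp h, ENNReal.mul_top (by simp [hz, ENNReal.ofReal_eq_zero, not_le])] at h1
  exact hm (top_le_iff.mp h1)

lemma tail_lintegral_lt_top (ν : Measure ℝ) (hm : ∫⁻ w in Ioi 0, ENNReal.ofReal w ∂ν ≠ ⊤)
    {x : ℝ} (hx : 0 ≤ x) : ∫⁻ w in Ioi x, ENNReal.ofReal (w - x) ∂ν ≠ ⊤ := by
  refine ne_top_of_le_ne_top hm ?_
  calc ∫⁻ w in Ioi x, ENNReal.ofReal (w - x) ∂ν
      ≤ ∫⁻ w in Ioi x, ENNReal.ofReal w ∂ν :=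
        lintegral_mono fun w => ENNReal.ofReal_le_ofReal (by linarith)
    _ ≤ ∫⁻ w in Ioi 0, ENNReal.ofReal w ∂ν := lintegral_mono_set (Ioi_subset_Ioi hx)

lemma ofReal_nuIbar (ν : Measure ℝ) [SigmaFinite ν]
    (hm : ∫⁻ w in Ioi 0, ENNReal.ofReal w ∂ν ≠ ⊤) {x : ℝ} (hx : 0 ≤ x) :
    ENNReal.ofReal (nuIbar ν x) = ∫⁻ w in Ioi x, ENNReal.ofReal (w - x) ∂ν := by
  have key : ∫⁻ z in Ioi x, ENNReal.ofReal (nuTail ν z)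
      = ∫⁻ w in Ioi x, ENNReal.ofReal (w - x) ∂ν := by
    rw [← layercake]
    refine setLIntegral_congr_fun measurableSet_Ioi (fun z hz => ?_)
    exact ENNReal.ofReal_toReal (tail_lt_top ν hm (lt_of_le_of_lt hx hz)).ne
  rw [nuIbar, integral_eq_lintegral_of_nonneg_ae (ae_of_all _ fun z => nuTail_nonneg ν z)
      ((meas_nuTail ν).aestronglyMeasurable), key,
    ENNReal.ofReal_toReal (tail_lintegral_lt_top ν hm hx)]

lemma nuIbar_le (ν : Measure ℝ) [SigmaFinite ν]
    (hm : ∫⁻ w in Ioi 0, ENNReal.ofReal w ∂ν ≠ ⊤) {x : ℝ} (hx : 0 ≤ x) :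
    nuIbar ν x ≤ (∫⁻ w in Ioi 0, ENNReal.ofReal w ∂ν).toReal := by
  have h1 : ENNReal.ofReal (nuIbar ν x) ≤ ∫⁻ w in Ioi 0, ENNReal.ofReal w ∂ν := by
    rw [ofReal_nuIbar ν hm hx]
    calc ∫⁻ w in Ioi x, ENNReal.ofReal (w - x) ∂ν
        ≤ ∫⁻ w in Ioi x, ENNReal.ofReal w ∂ν :=
          lintegral_mono fun w => ENNReal.ofReal_le_ofReal (by linarith)
      _ ≤ _ := lintegral_mono_set (Ioi_subset_Ioi hx)
  calc nuIbar ν x = (ENNReal.ofReal (nuIbar ν x)).toReal :=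
        (ENNReal.toReal_ofReal (nuIbar_nonneg ν x)).symm
    _ ≤ _ := ENNReal.toReal_mono hm h1

lemma exp_integral_Ioi {b : ℝ} (hb : 0 < b) (t : ℝ) :
    ∫ x in Ioi t, Real.exp (-b * x) = Real.exp (-b * t) / b := by
  have hderiv : ∀ x ∈ Ioi t, HasDerivAt (fun x => -Real.exp (-b * x) / b)
      (Real.exp (-b * x)) x := by
    intro x _
    have h1 : HasDerivAt (fun x : ℝ => -b * x) (-b) x := by
      simpa using (hasDerivAt_id x).const_mul (-b)
    have h2 := (h1.exp.neg).div_const b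
    refine h2.congr_deriv ?_
    field_simp
  have hcont : ContinuousWithinAt (fun x => -Real.exp (-b * x) / b) (Ici t) t := by
    exact (Continuous.continuousWithinAt (by fun_prop : Continuous fun x : ℝ => -Real.exp (-b * x) / b))
  have htend : Filter.Tendsto (fun x => -Real.exp (-b * x) / b) Filter.atTop (nhds 0) := by
    have : Filter.Tendsto (fun x : ℝ => Real.exp (-b * x)) Filter.atTop (nhds 0) := by
      rw [show (fun x : ℝ => Real.exp (-b * x)) = fun x : ℝ => Real.exp (-(b * x)) by
        funext x; ring_nf]
      exact Real.tendsto_exp_neg_atTop_nhds_zero.comp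
        (Filter.Tendsto.const_mul_atTop hb Filter.tendsto_id)
    simpa using (this.neg).div_const b
  rw [integral_Ioi_of_hasDerivAt_of_tendsto hcont hderiv (exp_neg_integrableOn_Ioi t hb) htend]
  field_simp
  ring

lemma integral_weight {γ : ℝ} (hγ : γ ≠ 0) {w : ℝ} (hw : 0 ≤ w) :
    ∫ x in (0:ℝ)..w, Real.exp (γ * x) * (w - x)
      = (Real.exp (γ * w) - γ * w - 1) / γ ^ 2 := by
  have hderiv : ∀ x ∈ uIcc (0:ℝ) w,
      HasDerivAt (fun x => Real.exp (γ * x) * (γ * (w - x) + 1) / γ ^ 2)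
        (Real.exp (γ * x) * (w - x)) x := by
    intro x _
    have h1 : HasDerivAt (fun x : ℝ => γ * x) γ x := by
      simpa using (hasDerivAt_id x).const_mul γ
    have h2 : HasDerivAt (fun x : ℝ => γ * (w - x) + 1) (-γ) x := by
      have := (((hasDerivAt_id x).const_sub w).const_mul γ).add_const 1
      simpa using this
    have h3 := (h1.exp.mul h2).div_const (γ ^ 2)
    refine h3.congr_deriv ?_
    field_simp
    ring
  rw [intervalIntegral.integral_eq_sub_of_hasDerivAt hderiv
    (Continuous.intervalIntegrable (by fun_prop) 0 w)]
  simp [Real.exp_zero]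
  field_simp
  ring

lemma kDens_nonneg {c D : ℝ} (hc : 0 < c) (hD : 0 < D) (x : ℝ) : 0 ≤ kDens c D x :=
  mul_nonneg (div_nonneg hc.le hD.le) (Real.exp_nonneg _)

lemma meas_conv (c D : ℝ) (ν : Measure ℝ) :
    Measurable fun x => ∫ t in Ioc (0:ℝ) x, kDens c D (x - t) * nuIbar ν t := by
  have h : StronglyMeasurable fun p : ℝ × ℝ =>
      (Ioc (0:ℝ) p.1).indicator (fun t => kDens c D (p.1 - t) * nuIbar ν t) p.2 := by
    apply Measurable.stronglyMeasurable
    have heq : (fun p : ℝ × ℝ =>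
        (Ioc (0:ℝ) p.1).indicator (fun t => kDens c D (p.1 - t) * nuIbar ν t) p.2)
        = fun p : ℝ × ℝ => if 0 < p.2 ∧ p.2 ≤ p.1
            then kDens c D (p.1 - p.2) * nuIbar ν p.2 else 0 := by
      funext p; simp [indicator_apply, mem_Ioc]
    rw [heq]
    refine Measurable.ite ?_ ?_ measurable_const
    · exact (measurableSet_lt measurable_const measurable_snd).inter
        (measurableSet_le measurable_snd measurable_fst)
    · have hk : Measurable fun p : ℝ × ℝ => kDens c D (p.1 - p.2) := by
        unfold kDens; fun_prop
      exact hk.mul ((meas_nuIbar ν).comp measurable_snd)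
  have h2 := h.integral_prod_right' (ν := volume)
  have heq2 : (fun x => ∫ t in Ioc (0:ℝ) x, kDens c D (x - t) * nuIbar ν t)
      = fun x => ∫ t, (Ioc (0:ℝ) x).indicator (fun t => kDens c D (x - t) * nuIbar ν t) t := by
    funext x; rw [← integral_indicator measurableSet_Ioc]
  rw [heq2]; exact h2.measurable

lemma conv_integrable (c D : ℝ) (hc : 0 < c) (hD : 0 < D) (ν : Measure ℝ) [SigmaFinite ν]
    (hm : ∫⁻ w in Ioi 0, ENNReal.ofReal w ∂ν ≠ ⊤) {x : ℝ} :
    IntegrableOn (fun t => kDens c D (x - t) * nuIbar ν t) (Ioc 0 x) := by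
  set Mb := (∫⁻ w in Ioi 0, ENNReal.ofReal w ∂ν).toReal
  refine Integrable.mono' (g := fun _ => (c / D) * Mb)
    (integrableOn_const measure_Ioc_lt_top.ne) ?_ ?_
  · have hk : Measurable fun t => kDens c D (x - t) := by unfold kDens; fun_prop
    exact (hk.mul (meas_nuIbar ν)).aestronglyMeasurable
  · refine (ae_restrict_iff' measurableSet_Ioc).2 (ae_of_all _ fun t ht => ?_)
    have h1 : 0 ≤ kDens c D (x - t) := kDens_nonneg hc hD _
    have h2 : kDens c D (x - t) ≤ c / D := by
      rw [kDens]
      have : Real.exp (-(c / D) * (x - t)) ≤ 1 := by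
        rw [Real.exp_le_one_iff]
        have : 0 ≤ x - t := by linarith [ht.2]
        nlinarith [div_pos hc hD]
      nlinarith [div_pos hc hD]
    rw [Real.norm_eq_abs, abs_of_nonneg (mul_nonneg h1 (nuIbar_nonneg ν t))]
    exact mul_le_mul h2 (nuIbar_le ν hm (le_of_lt ht.1)) (nuIbar_nonneg ν t)
      (div_nonneg hc.le hD.le)

lemma conv_lintegral (c D γ : ℝ) (hc : 0 < c) (hD : 0 < D) (ν : Measure ℝ) [SigmaFinite ν]
    (hm : ∫⁻ w in Ioi 0, ENNReal.ofReal w ∂ν ≠ ⊤) (hγ0 : 0 < γ) (hγ : γ < c / D) :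
    ∫⁻ x in Ioi (0:ℝ), ENNReal.ofReal (Real.exp (γ * x) *
        ((1 / c) * ∫ t in Ioc (0:ℝ) x, kDens c D (x - t) * nuIbar ν t))
      = ENNReal.ofReal (1 / (c - D * γ)) *
          ∫⁻ t in Ioi (0:ℝ), ENNReal.ofReal (Real.exp (γ * t) * nuIbar ν t) := by
  have hβγ : 0 < c / D - γ := by linarith
  have hcD : 0 < c - D * γ := by
    have := (lt_div_iff₀ hD).mp hγ
    nlinarith
  set R : ℝ → ℝ → ℝ := fun x t => Real.exp (γ * x) / c * (kDens c D (x - t) * nuIbar ν t)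
    with hR
  have hRnn : ∀ x t, 0 ≤ R x t := fun x t =>
    mul_nonneg (div_nonneg (Real.exp_nonneg _) hc.le)
      (mul_nonneg (kDens_nonneg hc hD _) (nuIbar_nonneg ν t))
  -- step 1: pointwise rewrite into double lintegral with indicator
  have step1 : ∫⁻ x in Ioi (0:ℝ), ENNReal.ofReal (Real.exp (γ * x) *
        ((1 / c) * ∫ t in Ioc (0:ℝ) x, kDens c D (x - t) * nuIbar ν t))
      = ∫⁻ x in Ioi (0:ℝ), ∫⁻ t in Ioi (0:ℝ),
          (if t ≤ x then ENNReal.ofReal (R x t) else 0) := by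
    refine setLIntegral_congr_fun measurableSet_Ioi (fun x _ => ?_)
    have e1 : Real.exp (γ * x) * ((1 / c) * ∫ t in Ioc (0:ℝ) x, kDens c D (x - t) * nuIbar ν t)
        = (Real.exp (γ * x) / c) * ∫ t in Ioc (0:ℝ) x, kDens c D (x - t) * nuIbar ν t := by
      ring
    rw [e1, ENNReal.ofReal_mul (div_nonneg (Real.exp_nonneg _) hc.le),
      ofReal_integral_eq_lintegral_ofReal (conv_integrable c D hc hD ν hm)
        ((ae_restrict_iff' measurableSet_Ioc).2 (ae_of_all _ fun t _ =>
          mul_nonneg (kDens_nonneg hc hD _) (nuIbar_nonneg ν t))),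
      ← lintegral_const_mul' _ _ ENNReal.ofReal_ne_top]
    have e2 : ∫⁻ t in Ioc (0:ℝ) x, ENNReal.ofReal (Real.exp (γ * x) / c) *
          ENNReal.ofReal (kDens c D (x - t) * nuIbar ν t)
        = ∫⁻ t in Ioi (0:ℝ), (Iic x).indicator (fun t => ENNReal.ofReal (R x t)) t := by
      rw [lintegral_indicator measurableSet_Iic, Measure.restrict_restrict measurableSet_Iic,
        Iic_inter_Ioi]
      refine setLIntegral_congr_fun measurableSet_Ioc (fun t _ => ?_)
      rw [hR, ← ENNReal.ofReal_mul (div_nonneg (Real.exp_nonneg _) hc.le)]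
    rw [e2]
    refine setLIntegral_congr_fun measurableSet_Ioi (fun t _ => ?_)
    simp [indicator_apply, mem_Iic]
  rw [step1]
  -- step 2: Tonelli swap
  have step2 : ∫⁻ x in Ioi (0:ℝ), ∫⁻ t in Ioi (0:ℝ),
        (if t ≤ x then ENNReal.ofReal (R x t) else 0)
      = ∫⁻ t in Ioi (0:ℝ), ∫⁻ x in Ioi (0:ℝ),
          (if t ≤ x then ENNReal.ofReal (R x t) else 0) := by
    apply lintegral_lintegral_swap
    apply Measurable.aemeasurable
    refine Measurable.ite (measurableSet_le measurable_snd measurable_fst) ?_ measurable_const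
    apply ENNReal.measurable_ofReal.comp
    have hk : Measurable fun p : ℝ × ℝ => kDens c D (p.1 - p.2) := by
      unfold kDens; fun_prop
    exact ((Real.measurable_exp.comp (measurable_fst.const_mul γ)).div_const c).mul
      (hk.mul ((meas_nuIbar ν).comp measurable_snd))
  rw [step2]
  -- step 3: compute inner integral over x
  have step3 : ∀ t ∈ Ioi (0:ℝ),
      ∫⁻ x in Ioi (0:ℝ), (if t ≤ x then ENNReal.ofReal (R x t) else 0)
        = ENNReal.ofReal ((1 / (c - D * γ)) * (Real.exp (γ * t) * nuIbar ν t)) := by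
    intro t ht
    rw [mem_Ioi] at ht
    have e1 : ∫⁻ x in Ioi (0:ℝ), (if t ≤ x then ENNReal.ofReal (R x t) else 0)
        = ∫⁻ x in Ici t, ENNReal.ofReal (R x t) := by
      have h1 : ∫⁻ x in Ici t, ENNReal.ofReal (R x t)
          = ∫⁻ x in Ioi (0:ℝ), (Ici t).indicator (fun x => ENNReal.ofReal (R x t)) x := by
        have hset : Ici t ∩ Ioi (0:ℝ) = Ici t :=
          inter_eq_left.2 fun x hx => lt_of_lt_of_le ht hx
        rw [lintegral_indicator measurableSet_Ici, Measure.restrict_restrict measurableSet_Ici,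
          hset]
      rw [h1]
      refine setLIntegral_congr_fun measurableSet_Ioi (fun x _ => ?_)
      simp [indicator_apply, mem_Ici]
    rw [e1]
    -- R x t = C * exp(-(c/D - γ) x)
    set C : ℝ := (c / D) * nuIbar ν t * Real.exp ((c / D) * t) / c with hC
    have hRe : ∀ x, R x t = C * Real.exp (-(c / D - γ) * x) := by
      intro x
      simp only [hR, hC, kDens]
      rw [show -(c / D) * (x - t) = (c / D) * t + (-(c / D) * x) by ring, Real.exp_add]
      rw [show -(c / D - γ) * x = γ * x + (-(c / D) * x) by ring, Real.exp_add]
      ring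
    have hCnn : 0 ≤ C :=
      div_nonneg (mul_nonneg (mul_nonneg (div_nonneg hc.le hD.le) (nuIbar_nonneg ν t))
        (Real.exp_nonneg _)) hc.le
    have hInt : IntegrableOn (fun x => R x t) (Ici t) := by
      rw [integrableOn_Ici_iff_integrableOn_Ioi]
      have h2 := (exp_neg_integrableOn_Ioi t hβγ).const_mul C
      exact h2.congr (ae_of_all _ fun x => (hRe x).symm)
    rw [← ofReal_integral_eq_lintegral_ofReal hInt (ae_of_all _ fun x => hRnn x t)]
    congr 1
    rw [integral_Ici_eq_integral_Ioi]
    rw [setIntegral_congr_fun measurableSet_Ioi (fun x _ => hRe x), integral_const_mul,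
      exp_integral_Ioi hβγ t]
    rw [hC]
    rw [show -(c / D - γ) * t = γ * t + (-(c / D) * t) by ring, Real.exp_add,
      show (-(c/D) * t) = -((c/D) * t) by ring, Real.exp_neg]
    have hexp := Real.exp_pos ((c / D) * t)
    field_simp
  rw [setLIntegral_congr_fun measurableSet_Ioi step3]
  have : ∀ t : ℝ, ENNReal.ofReal ((1 / (c - D * γ)) * (Real.exp (γ * t) * nuIbar ν t))
      = ENNReal.ofReal (1 / (c - D * γ)) * ENNReal.ofReal (Real.exp (γ * t) * nuIbar ν t) :=
    fun t => ENNReal.ofReal_mul (by positivity)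
  simp_rw [this]
  rw [lintegral_const_mul' _ _ ENNReal.ofReal_ne_top]

lemma S_eq (γ : ℝ) (hγ0 : 0 < γ) (ν : Measure ℝ) [SigmaFinite ν]
    (hm_int : IntegrableOn (fun z => z) (Ioi (0 : ℝ)) ν)
    (hint : IntegrableOn (fun z => Real.exp (γ * z) - 1) (Ioi (0 : ℝ)) ν)
    (hm : ∫⁻ w in Ioi 0, ENNReal.ofReal w ∂ν ≠ ⊤) :
    ∫⁻ t in Ioi (0:ℝ), ENNReal.ofReal (Real.exp (γ * t) * nuIbar ν t)
      = ENNReal.ofReal ((1 / γ ^ 2) *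
          ((∫ z in Ioi (0:ℝ), (Real.exp (γ * z) - 1) ∂ν) - γ * ∫ z in Ioi (0:ℝ), z ∂ν)) := by
  have step1 : ∫⁻ t in Ioi (0:ℝ), ENNReal.ofReal (Real.exp (γ * t) * nuIbar ν t)
      = ∫⁻ t in Ioi (0:ℝ), ∫⁻ w in Ioi (0:ℝ),
          ENNReal.ofReal (Real.exp (γ * t)) * ENNReal.ofReal (w - t) ∂ν := by
    refine setLIntegral_congr_fun measurableSet_Ioi (fun t ht => ?_)
    have hext : ∫⁻ w in Ioi t, ENNReal.ofReal (w - t) ∂ν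
        = ∫⁻ w in Ioi (0:ℝ), ENNReal.ofReal (w - t) ∂ν := by
      have h1 : ∫⁻ w in Ioi t, ENNReal.ofReal (w - t) ∂ν
          = ∫⁻ w in Ioi (0:ℝ), (Ioi t).indicator (fun w => ENNReal.ofReal (w - t)) w ∂ν := by
        rw [lintegral_indicator measurableSet_Ioi, Measure.restrict_restrict measurableSet_Ioi,
          Ioi_inter_Ioi, max_eq_left (le_of_lt ht)]
      rw [h1]
      refine setLIntegral_congr_fun measurableSet_Ioi (fun w _ => ?_)
      by_cases hw : w ∈ Ioi t
      · simp [hw]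
      · rw [mem_Ioi, not_lt] at hw
        simp [indicator_apply, mem_Ioi, not_lt.2 hw,
          ENNReal.ofReal_eq_zero.2 (by linarith : w - t ≤ 0)]
    rw [ENNReal.ofReal_mul (Real.exp_nonneg _), ofReal_nuIbar ν hm (le_of_lt ht), hext,
      ← lintegral_const_mul' _ _ ENNReal.ofReal_ne_top]
  rw [step1]
  have swap : ∫⁻ t in Ioi (0:ℝ), ∫⁻ w in Ioi (0:ℝ),
        ENNReal.ofReal (Real.exp (γ * t)) * ENNReal.ofReal (w - t) ∂ν
      = ∫⁻ w in Ioi (0:ℝ), ∫⁻ t in Ioi (0:ℝ),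
          ENNReal.ofReal (Real.exp (γ * t)) * ENNReal.ofReal (w - t) ∂volume ∂ν := by
    apply lintegral_lintegral_swap
    apply Measurable.aemeasurable
    exact ((ENNReal.measurable_ofReal.comp
        (Real.measurable_exp.comp (measurable_fst.const_mul γ))).mul
      (ENNReal.measurable_ofReal.comp (measurable_snd.sub measurable_fst)))
  rw [swap]
  have inner : ∀ w ∈ Ioi (0:ℝ),
      ∫⁻ t in Ioi (0:ℝ), ENNReal.ofReal (Real.exp (γ * t)) * ENNReal.ofReal (w - t)
        = ENNReal.ofReal ((Real.exp (γ * w) - γ * w - 1) / γ ^ 2) := by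
    intro w hw
    rw [mem_Ioi] at hw
    have e1 : ∫⁻ t in Ioi (0:ℝ), ENNReal.ofReal (Real.exp (γ * t)) * ENNReal.ofReal (w - t)
        = ∫⁻ t in Ioo (0:ℝ) w, ENNReal.ofReal (Real.exp (γ * t) * (w - t)) := by
      have h1 : ∫⁻ t in Ioo (0:ℝ) w, ENNReal.ofReal (Real.exp (γ * t) * (w - t))
          = ∫⁻ t in Ioi (0:ℝ),
              (Iio w).indicator (fun t => ENNReal.ofReal (Real.exp (γ * t) * (w - t))) t := by
        rw [lintegral_indicator measurableSet_Iio, Measure.restrict_restrict measurableSet_Iio,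
          Iio_inter_Ioi]
      rw [h1]
      refine setLIntegral_congr_fun measurableSet_Ioi (fun t _ => ?_)
      by_cases ht : t ∈ Iio w
      · simp only [indicator_apply, ht, if_pos, ENNReal.ofReal_mul (Real.exp_nonneg _)]
      · rw [mem_Iio, not_lt] at ht
        simp [indicator_apply, mem_Iio, not_lt.2 ht,
          ENNReal.ofReal_eq_zero.2 (by linarith : w - t ≤ 0)]
    rw [e1]
    have hInt : IntegrableOn (fun t => Real.exp (γ * t) * (w - t)) (Ioo 0 w) := by
      rw [← intervalIntegrable_iff_integrableOn_Ioo_of_le (le_of_lt hw)]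
      exact Continuous.intervalIntegrable (by fun_prop) 0 w
    rw [← ofReal_integral_eq_lintegral_ofReal hInt
      ((ae_restrict_iff' measurableSet_Ioo).2 (ae_of_all _ fun t ht =>
        mul_nonneg (Real.exp_nonneg _) (by linarith [ht.2])))]
    rw [← integral_Ioc_eq_integral_Ioo, ← intervalIntegral.integral_of_le (le_of_lt hw),
      integral_weight (ne_of_gt hγ0) (le_of_lt hw)]
  rw [setLIntegral_congr_fun measurableSet_Ioi inner]
  have hφeq : (fun w => (Real.exp (γ * w) - γ * w - 1) / γ ^ 2)
      = fun w => (1 / γ ^ 2) * ((Real.exp (γ * w) - 1) - γ * w) := by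
    funext w; ring
  have hφint : IntegrableOn (fun w => (Real.exp (γ * w) - γ * w - 1) / γ ^ 2) (Ioi 0) ν := by
    rw [hφeq]; exact ((hint.sub (hm_int.const_mul γ)).const_mul (1 / γ ^ 2))
  rw [← ofReal_integral_eq_lintegral_ofReal hφint (ae_of_all _ fun w =>
    div_nonneg (by nlinarith [Real.add_one_le_exp (γ * w)]) (by positivity))]
  congr 1
  rw [hφeq, integral_const_mul, integral_sub hint (hm_int.const_mul γ), integral_const_mul]


end TiltedAux

/-- The integral of the exponentially tilted inhomogeneous term:
`∫₀^∞ e^{γx} h(x) dx = (1/(γ(c−Dγ)))[(1/γ)∫₀^∞(e^{γz}−1)ν(dz) − m] + D/(c−Dγ)`,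
which simplifies to `(c − m)/(γ(c − Dγ))` under the Lundberg identity. -/
theorem tilted_h_integral
    (c D γ : ℝ) (hc : 0 < c) (hD : 0 < D)
    (ν : Measure ℝ) [SigmaFinite ν]
    (hm_int : IntegrableOn (fun z => z) (Ioi (0 : ℝ)) ν)
    (hγ0 : 0 < γ) (hγ : γ < c / D)
    (hint : IntegrableOn (fun z => Real.exp (γ * z) - 1) (Ioi (0 : ℝ)) ν) :
    (∫ x in Ioi (0 : ℝ), Real.exp (γ * x) * renH c D ν x)
      = (1 / (γ * (c - D * γ)))
          * ((1 / γ) * (∫ z in Ioi (0 : ℝ), (Real.exp (γ * z) - 1) ∂ν)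
              - ∫ z in Ioi (0 : ℝ), z ∂ν)
        + D / (c - D * γ) ∧
      (c * γ - D * γ ^ 2 = (∫ z in Ioi (0 : ℝ), (Real.exp (γ * z) - 1) ∂ν) →
        (∫ x in Ioi (0 : ℝ), Real.exp (γ * x) * renH c D ν x)
          = (c - ∫ z in Ioi (0 : ℝ), z ∂ν) / (γ * (c - D * γ))) := by
  set E := ∫ z in Ioi (0 : ℝ), (Real.exp (γ * z) - 1) ∂ν with hE
  set M := ∫ z in Ioi (0 : ℝ), z ∂ν with hM
  have hβγ : 0 < c / D - γ := by linarith
  have hcD : 0 < c - D * γ := by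
    have := (lt_div_iff₀ hD).mp hγ
    nlinarith
  have hm : ∫⁻ w in Ioi (0:ℝ), ENNReal.ofReal w ∂ν ≠ ⊤ := by
    have h : ∫⁻ w in Ioi (0:ℝ), ‖w‖ₑ ∂ν < ⊤ := hm_int.2
    refine ne_top_of_le_ne_top h.ne (le_of_eq ?_)
    refine setLIntegral_congr_fun measurableSet_Ioi (fun w hw => ?_)
    rw [← Real.enorm_eq_ofReal (le_of_lt hw)]
  -- the measurable version of the convolution term
  set conv : ℝ → ℝ := fun x => ∫ t in Ioc (0:ℝ) x, kDens c D (x - t) * nuIbar ν t with hconv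
  set G : ℝ → ℝ := fun x => Real.exp (γ * x) * ((1 / c) * conv x + Real.exp (-(c / D) * x))
    with hG
  have hGmeas : Measurable G := by
    apply (Real.measurable_exp.comp (measurable_id.const_mul γ)).mul
    exact (((meas_conv c D ν).const_mul (1/c)).add
      (Real.measurable_exp.comp (measurable_id.const_mul (-(c/D)))))
  have hconv_nonneg : ∀ x, 0 ≤ conv x := fun x =>
    setIntegral_nonneg measurableSet_Ioc fun t _ =>
      mul_nonneg (kDens_nonneg hc hD _) (nuIbar_nonneg ν t)
  have hGnonneg : ∀ x, 0 ≤ G x := fun x =>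
    mul_nonneg (Real.exp_nonneg _)
      (add_nonneg (mul_nonneg (by positivity) (hconv_nonneg x)) (Real.exp_nonneg _))
  -- replace renH with G
  have hcongr : (∫ x in Ioi (0 : ℝ), Real.exp (γ * x) * renH c D ν x)
      = ∫ x in Ioi (0 : ℝ), G x := by
    refine setIntegral_congr_fun measurableSet_Ioi fun x hx => ?_
    rw [mem_Ioi] at hx
    simp only [hG, renH, hconv]
    rw [intervalIntegral.integral_of_le hx.le]
  -- lintegral split
  have hsplit : ∫⁻ x in Ioi (0:ℝ), ENNReal.ofReal (G x)
      = (∫⁻ x in Ioi (0:ℝ), ENNReal.ofReal (Real.exp (γ * x) * ((1 / c) * conv x)))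
        + ∫⁻ x in Ioi (0:ℝ), ENNReal.ofReal (Real.exp (γ * x) * Real.exp (-(c / D) * x)) := by
    rw [← lintegral_add_left]
    · refine setLIntegral_congr_fun measurableSet_Ioi (fun x _ => ?_)
      rw [hG]
      simp only []
      rw [mul_add, ENNReal.ofReal_add
        (mul_nonneg (Real.exp_nonneg _) (mul_nonneg (by positivity) (hconv_nonneg x)))
        (mul_nonneg (Real.exp_nonneg _) (Real.exp_nonneg _))]
    · apply ENNReal.measurable_ofReal.comp
      exact (Real.measurable_exp.comp (measurable_id.const_mul γ)).mul
        ((meas_conv c D ν).const_mul (1/c))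
  -- second piece
  have hT2 : ∫⁻ x in Ioi (0:ℝ), ENNReal.ofReal (Real.exp (γ * x) * Real.exp (-(c / D) * x))
      = ENNReal.ofReal (1 / (c / D - γ)) := by
    have e1 : ∀ x : ℝ, Real.exp (γ * x) * Real.exp (-(c / D) * x)
        = Real.exp (-(c / D - γ) * x) := by
      intro x
      rw [← Real.exp_add]
      congr 1
      ring
    simp_rw [e1]
    rw [← ofReal_integral_eq_lintegral_ofReal (exp_neg_integrableOn_Ioi 0 hβγ)
      (ae_of_all _ fun x => Real.exp_nonneg _)]
    rw [exp_integral_Ioi hβγ 0]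
    norm_num
  -- assemble
  have hφnn : 0 ≤ (1 / γ ^ 2) * (E - γ * M) := by
    have hEM : E - γ * M = ∫ z in Ioi (0:ℝ), ((Real.exp (γ * z) - 1) - γ * z) ∂ν := by
      rw [integral_sub hint (hm_int.const_mul γ), integral_const_mul]
    have h2 : 0 ≤ E - γ * M := by
      rw [hEM]
      refine integral_nonneg fun z => ?_
      show (0:ℝ) ≤ Real.exp (γ * z) - 1 - γ * z
      nlinarith [Real.add_one_le_exp (γ * z)]
    positivity
  have hmain : (∫ x in Ioi (0 : ℝ), Real.exp (γ * x) * renH c D ν x)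
      = (1 / (c - D * γ)) * ((1 / γ ^ 2) * (E - γ * M)) + 1 / (c / D - γ) := by
    rw [hcongr]
    rw [integral_eq_lintegral_of_nonneg_ae (ae_of_all _ hGnonneg)
      hGmeas.aestronglyMeasurable]
    rw [hsplit, conv_lintegral c D γ hc hD ν hm hγ0 hγ, S_eq γ hγ0 ν hm_int hint hm, hT2]
    rw [← hE, ← hM, ← ENNReal.ofReal_mul (by positivity), ← ENNReal.ofReal_add
      (mul_nonneg (by positivity) hφnn) (by positivity)]
    rw [ENNReal.toReal_ofReal (add_nonneg (mul_nonneg (by positivity) hφnn) (by positivity))]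
  have h1 : 1 / (c / D - γ) = D / (c - D * γ) := by
    rw [div_eq_div_iff (by linarith) (by linarith)]
    field_simp
  constructor
  · rw [hmain, h1]
    have hγn : γ ≠ 0 := ne_of_gt hγ0
    have hcDn : c - D * γ ≠ 0 := ne_of_gt hcD
    have h0 : (1:ℝ) / γ * E - M = 1 / γ * (E - γ * M) := by field_simp
    have h2 : 1 / (c - D * γ) * (1 / γ ^ 2 * (E - γ * M))
        = 1 / (γ * (c - D * γ)) * (1 / γ * E - M) := by
      rw [h0]
      field_simp
    rw [h2]
  · intro hL
    rw [hmain, h1, ← hL]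
    have hγn : γ ≠ 0 := ne_of_gt hγ0
    have hcDn : c - D * γ ≠ 0 := ne_of_gt hcD
    field_simp
    ring
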